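/- For every μ > 0 there exists C > 0 such that for all η, a, b ∈ ℝ: (i) 1/(4π²((η−a)² + (η−b)²) + 2μ) ≤ C·(1+a²)/(1+η²); and (ii) |1/(4π²((η−a)² + (η−b)²) + 2μ) − 1/(8π²η² + 2μ)| ≤ C·(|a+b|·|η| + a² + b²)·(1+a²)/(1+η²)². -/
import Mathlib


/-- Resolvent comparison inequalities used for the spatial correlation of the
stationary linearized solution. -/
theorem stmt_18 (μ : ℝ) (hμ : 0 < μ) :
    ∃ C > (0:ℝ), ∀ η a b : ℝ,
      (1 / (4 * Real.pi ^ 2 * ((η - a) ^ 2 + (η - b) ^ 2) + 2 * μ)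
          ≤ C * (1 + a ^ 2) / (1 + η ^ 2)) ∧
      |1 / (4 * Real.pi ^ 2 * ((η - a) ^ 2 + (η - b) ^ 2) + 2 * μ)
          - 1 / (8 * Real.pi ^ 2 * η ^ 2 + 2 * μ)|
        ≤ C * (|a + b| * |η| + a ^ 2 + b ^ 2) * (1 + a ^ 2) / (1 + η ^ 2) ^ 2 := by
  have hπ : 0 < Real.pi := Real.pi_pos
  have hπ3 : 3 < Real.pi := Real.pi_gt_three
  have hπ2 : (9:ℝ) ≤ Real.pi ^ 2 := by nlinarith
  set K : ℝ := (1 + 2*μ)/(2*μ) with hKdef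
  have hK1 : 1 ≤ K := by
    rw [hKdef, le_div_iff₀ (by linarith)]; linarith
  have hK0 : 0 < K := lt_of_lt_of_le one_pos hK1
  have hKμ : 2*μ*K = 1 + 2*μ := by
    rw [hKdef]; field_simp
  clear_value K
  have hA : ∀ x : ℝ, 1 + x ^ 2 ≤ K * (4 * Real.pi ^ 2 * x ^ 2 + 2 * μ) := by
    intro x
    have h1 : (0:ℝ) ≤ 4 * Real.pi ^ 2 * K - 1 := by nlinarith
    nlinarith [mul_nonneg h1 (sq_nonneg x)]
  refine ⟨2*K + 16*Real.pi^2*K^2,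
    add_pos_of_pos_of_nonneg (by linarith) (by positivity), fun η a b => ?_⟩
  set D1 : ℝ := 4 * Real.pi ^ 2 * ((η - a) ^ 2 + (η - b) ^ 2) + 2 * μ with hD1def
  set D2 : ℝ := 8 * Real.pi ^ 2 * η ^ 2 + 2 * μ with hD2def
  clear_value D1 D2
  have hD1 : 0 < D1 := by rw [hD1def]; positivity
  have hD2 : 0 < D2 := by rw [hD2def]; positivity
  have hη : (0:ℝ) < 1 + η ^ 2 := by positivity
  have ha : (0:ℝ) < 1 + a ^ 2 := by positivity
  have hi : 1 + η ^ 2 ≤ 2 * K * (1 + a ^ 2) * D1 := by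
    have h1 : 1 + η ^ 2 ≤ 2 * (1 + a ^ 2) * (1 + (η - a) ^ 2) := by
      nlinarith [sq_nonneg (η - 2*a), mul_nonneg (sq_nonneg a) (sq_nonneg (η - a))]
    have h2 := hA (η - a)
    have h3 : K * (4 * Real.pi ^ 2 * (η - a) ^ 2 + 2 * μ) ≤ K * D1 := by
      rw [hD1def]
      nlinarith [mul_nonneg hK0.le (by positivity : (0:ℝ) ≤ 4*Real.pi^2*(η-b)^2)]
    have h4 : 1 + (η - a) ^ 2 ≤ K * D1 := le_trans h2 h3
    have h5 := mul_le_mul_of_nonneg_left h4 (by positivity : (0:ℝ) ≤ 2*(1+a^2))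
    nlinarith [h1, h5]
  have hj : 1 + η ^ 2 ≤ K * D2 := by
    have h2 := hA η
    rw [hD2def]
    nlinarith [mul_nonneg hK0.le (by positivity : (0:ℝ) ≤ 4*Real.pi^2*η^2)]
  constructor
  · rw [div_le_div_iff₀ hD1 hη]
    nlinarith [hi, mul_nonneg (mul_nonneg
      (by positivity : (0:ℝ) ≤ 16*Real.pi^2*K^2) ha.le) hD1.le]
  · rw [div_sub_div _ _ hD1.ne' hD2.ne', abs_div, abs_of_pos (mul_pos hD1 hD2)]
    simp only [one_mul, mul_one]
    rw [div_le_div_iff₀ (mul_pos hD1 hD2) (by positivity)]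
    have hS : (0:ℝ) ≤ |a + b| * |η| + a ^ 2 + b ^ 2 := by positivity
    have hdiff : |D2 - D1| ≤ 8 * Real.pi ^ 2 * (|a + b| * |η| + a ^ 2 + b ^ 2) := by
      have habs : |(a + b) * η| = |a + b| * |η| := abs_mul _ _
      have h8 := mul_le_mul_of_nonneg_left (le_abs_self ((a+b)*η))
        (by positivity : (0:ℝ) ≤ 8*Real.pi^2)
      have h9 := mul_le_mul_of_nonneg_left (neg_abs_le ((a+b)*η))
        (by positivity : (0:ℝ) ≤ 8*Real.pi^2)
      rw [habs] at h8 h9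
      have he : D2 - D1 = 8*Real.pi^2*((a+b)*η) - 4*Real.pi^2*(a^2+b^2) := by
        rw [hD1def, hD2def]; ring
      have hnn : (0:ℝ) ≤ Real.pi^2*(a^2+b^2) := by positivity
      rw [he, abs_le]
      clear hA hKdef hD1def hD2def hKμ hi hj hS habs hD1 hD2 hK1 hK0
      constructor
      · nlinarith [h9, hnn]
      · nlinarith [h8, hnn]
    have hpos : (0:ℝ) < 2 * K * (1 + a ^ 2) * D1 :=
      mul_pos (mul_pos (mul_pos (by norm_num : (0:ℝ) < 2) hK0) ha) hD1
    have hsq : (1 + η ^ 2) ^ 2 ≤ (2 * K * (1 + a ^ 2) * D1) * (K * D2) := by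
      rw [sq]
      exact mul_le_mul hi hj hη.le hpos.le
    have hmain : |D2 - D1| * (1 + η ^ 2) ^ 2
        ≤ (8 * Real.pi ^ 2 * (|a + b| * |η| + a ^ 2 + b ^ 2))
          * ((2 * K * (1 + a ^ 2) * D1) * (K * D2)) :=
      mul_le_mul hdiff hsq (sq_nonneg _) (by positivity)
    have heq : (2*K + 16*Real.pi^2*K^2) * (|a + b| * |η| + a ^ 2 + b ^ 2)
          * (1 + a ^ 2) * (D1 * D2)
        = (8 * Real.pi ^ 2 * (|a + b| * |η| + a ^ 2 + b ^ 2))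
            * ((2 * K * (1 + a ^ 2) * D1) * (K * D2))
          + (2*K) * ((|a + b| * |η| + a ^ 2 + b ^ 2) * ((1 + a ^ 2) * (D1 * D2))) := by
      ring
    have hnn2 : (0:ℝ) ≤ (2*K) * ((|a + b| * |η| + a ^ 2 + b ^ 2) * ((1 + a ^ 2) * (D1 * D2))) :=
      mul_nonneg (by linarith) (mul_nonneg hS (mul_nonneg ha.le (mul_pos hD1 hD2).le))
    linarith [hmain, hnn2]
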